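/- Let P(λ) = ∑_{i=0}^{k} A_i λ^i be an n×n complex matrix polynomial of degree k (A_k ≠ 0) with A_0 ≠ 0, and let δ ∈ ℂ be nonzero. Let x, y ∈ ℂ^n be nonzero with P(δ)x = 0, y*P(δ) = 0 and y*P′(δ)x ≠ 0. Then κ_P(δ) = κ_{rev P}(1/δ); that is, (∑_{i=0}^{k} |δ|^i ‖A_i‖₂) · ‖y‖₂ · ‖x‖₂ / (|δ| · |y*P′(δ)x|) = (∑_{i=0}^{k} |1/δ|^i ‖A_{k−i}‖₂) · ‖y‖₂ · ‖x‖₂ / (|1/δ| · |y*(rev P)′(1/δ)x|), where P′ and (rev P)′ denote the derivatives of P and rev P with respect to λ. -/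

import Mathlib

open Finset Matrix

noncomputable section
namespace MPoly

abbrev Mat (n : ℕ) := Matrix (Fin n) (Fin n) ℂ

variable {n : ℕ}

/-- Euclidean norm of a complex vector. -/
def vecNorm {ι : Type*} [Fintype ι] (x : ι → ℂ) : ℝ :=
  Real.sqrt (∑ i, ‖x i‖ ^ 2)

/-- Spectral norm (operator norm induced by the Euclidean vector norm). -/
def specNorm {ι κ : Type*} [Fintype ι] [Fintype κ] [DecidableEq κ] (M : Matrix ι κ ℂ) : ℝ :=
  ‖LinearMap.toContinuousLinearMap (Matrix.toEuclideanLin M)‖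

/-- Evaluation of the matrix polynomial `P(λ) = ∑_{i=0}^k A_i λ^i`. -/
def Peval (k : ℕ) (A : ℕ → Mat n) (lam : ℂ) : Mat n :=
  ∑ i ∈ Finset.range (k + 1), lam ^ i • A i

/-- Derivative `P′(λ) = ∑_{i=1}^k i A_i λ^{i-1}`. -/
def Pderiv (k : ℕ) (A : ℕ → Mat n) (lam : ℂ) : Mat n :=
  ∑ i ∈ Finset.range k, (((i : ℂ) + 1) * lam ^ i) • A (i + 1)

/-- `i`-th Horner shift `P_i(λ) = ∑_{j=0}^i λ^j A_{k-i+j}`. -/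
def horner (k : ℕ) (A : ℕ → Mat n) (i : ℕ) (lam : ℂ) : Mat n :=
  ∑ j ∈ Finset.range (i + 1), lam ^ j • A (k - i + j)

/-- `P^i(λ) = ∑_{j=0}^i λ^j A_j`. -/
def lowPart (A : ℕ → Mat n) (i : ℕ) (lam : ℂ) : Mat n :=
  ∑ j ∈ Finset.range (i + 1), lam ^ j • A j

/-- `q`-th (0-indexed) block of `Δ(λ)`. -/
def DeltaBlock (k : ℕ) (A : ℕ → Mat n) (lam : ℂ) (q : ℕ) : Mat n :=
  if q % 2 = 0 then lam ^ ((k - 1 - q) / 2) • (1 : Mat n)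
  else lam ^ ((k - q) / 2) • horner k A q lam

/-- The kn×n matrix `Δ(λ)`. -/
def Delta (k : ℕ) (A : ℕ → Mat n) (lam : ℂ) : Matrix (Fin k × Fin n) (Fin n) ℂ :=
  Matrix.of fun p b => DeltaBlock k A lam p.1.1 p.2 b

/-- The n×kn block-transpose `Δᴮ(λ)`. -/
def DeltaB (k : ℕ) (A : ℕ → Mat n) (lam : ℂ) : Matrix (Fin n) (Fin k × Fin n) ℂ :=
  Matrix.of fun a q => DeltaBlock k A lam q.1.1 a q.2

/-- (0-indexed) blocks of `𝒯₁`. -/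
def T1Block (k : ℕ) (A : ℕ → Mat n) (i j : ℕ) : Mat n :=
  if i = j then (if i % 2 = 0 then A (k - i) else 0)
  else if (j = i + 1 ∧ i % 2 = 1) ∨ (i = j + 1 ∧ j % 2 = 1) then 1 else 0

/-- (0-indexed) blocks of `𝒯₀`. -/
def T0Block (k : ℕ) (A : ℕ → Mat n) (i j : ℕ) : Mat n :=
  if i = j then (if i % 2 = 0 then -(A (k - i - 1)) else 0)
  else if (j = i + 1 ∧ i % 2 = 0) ∨ (i = j + 1 ∧ j % 2 = 0) then 1 else 0

/-- `𝒯₁`. -/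
def TT1 (k : ℕ) (A : ℕ → Mat n) : Matrix (Fin k × Fin n) (Fin k × Fin n) ℂ :=
  Matrix.of fun p q => T1Block k A p.1.1 q.1.1 p.2 q.2

/-- `𝒯₀`. -/
def TT0 (k : ℕ) (A : ℕ → Mat n) : Matrix (Fin k × Fin n) (Fin k × Fin n) ℂ :=
  Matrix.of fun p q => T0Block k A p.1.1 q.1.1 p.2 q.2

/-- The pencil `𝒯_P(λ) = λ𝒯₁ - 𝒯₀`. -/
def Tpencil (k : ℕ) (A : ℕ → Mat n) (lam : ℂ) : Matrix (Fin k × Fin n) (Fin k × Fin n) ℂ :=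
  lam • TT1 k A - TT0 k A

/-- Block anti-diagonal flip matrix `R`. -/
def Rmat (k n : ℕ) : Matrix (Fin k × Fin n) (Fin k × Fin n) ℂ :=
  Matrix.of fun p q => if p.1.1 + q.1.1 = k - 1 ∧ p.2 = q.2 then 1 else 0

/-- Block-diagonal sign matrix `S` (block `i` (1-indexed) is `-I` iff `i ≡ 0,1 mod 4`). -/
def Smat (k n : ℕ) : Matrix (Fin k × Fin n) (Fin k × Fin n) ℂ :=
  Matrix.of fun p q =>
    if p = q then (if (p.1.1 + 1) % 4 = 0 ∨ (p.1.1 + 1) % 4 = 1 then -1 else 1) else 0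

/-- `D = diag(I, -I, I, …, I)`. -/
def Dmat (k n : ℕ) : Matrix (Fin k × Fin n) (Fin k × Fin n) ℂ :=
  Matrix.of fun p q => if p = q then ((-1 : ℂ)) ^ p.1.1 else 0

/-- `e_k ⊗ I_n`: kn×n matrix with last block `I_n`. -/
def ekI (k n : ℕ) : Matrix (Fin k × Fin n) (Fin n) ℂ :=
  Matrix.of fun p b => if p.1.1 = k - 1 ∧ p.2 = b then 1 else 0

/-- The pencil `ℛ_P(λ) = S R 𝒯_P(λ) R S`. -/
def Rpencil (k : ℕ) (A : ℕ → Mat n) (lam : ℂ) : Matrix (Fin k × Fin n) (Fin k × Fin n) ℂ :=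
  Smat k n * Rmat k n * Tpencil k A lam * Rmat k n * Smat k n

/-- `max_{i=0:k} ‖A_i‖₂`. -/
def maxA (k : ℕ) (A : ℕ → Mat n) : ℝ :=
  (Finset.range (k + 1)).sup' (Finset.nonempty_range_iff.mpr (Nat.succ_ne_zero k)) fun i => specNorm (A i)

/-- `max_{i=0:k} max{1, ‖A_i‖₂}`. -/
def maxA1 (k : ℕ) (A : ℕ → Mat n) : ℝ :=
  (Finset.range (k + 1)).sup' (Finset.nonempty_range_iff.mpr (Nat.succ_ne_zero k)) fun i => max 1 (specNorm (A i))

/-- The quantity `d₁(δ)`. -/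
def d1 (k : ℕ) (δ : ℂ) : ℝ :=
  ∑ r ∈ Finset.range ((k - 1) / 2 + 1), ‖δ‖ ^ (2 * r)
    + ∑ r ∈ Finset.Icc 1 ((k - 1) / 2),
        ((k : ℝ) - 2 * r + 1) * ∑ s ∈ Finset.Icc r (k - r), ‖δ‖ ^ (2 * s)

/-- `ρ₁`. -/
def rho1 (k : ℕ) (A : ℕ → Mat n) : ℝ :=
  ((Finset.range (k + 1)).sup' (Finset.nonempty_range_iff.mpr (Nat.succ_ne_zero k)) fun i => max 1 (specNorm (A i) ^ 3))
    / min (specNorm (A k)) (specNorm (A 0))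

/-- `ρ₂`. -/
def rho2 (k : ℕ) (A : ℕ → Mat n) : ℝ :=
  min (max 1 (specNorm (A k))) (max 1 (specNorm (A 0))) / maxA k A

/-- `ρ′`. -/
def rho' (k : ℕ) (A : ℕ → Mat n) : ℝ :=
  ((Finset.range (k + 1)).sup' (Finset.nonempty_range_iff.mpr (Nat.succ_ne_zero k)) fun i => max 1 (specNorm (A i) ^ 2))
    / min (specNorm (A k)) (specNorm (A 0))

/-- `det P(λ)` as a polynomial in `λ`. -/
def detPoly (k : ℕ) (A : ℕ → Mat n) : Polynomial ℂ :=
  (∑ i ∈ Finset.range (k + 1), (Polynomial.X : Polynomial ℂ) ^ i • (A i).map Polynomial.C).det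

/-- `L₁¹` (leading coefficient of `D₁(λ,P)`). -/
def D1L1 (k : ℕ) (A : ℕ → Mat n) : Matrix (Fin k × Fin n) (Fin k × Fin n) ℂ :=
  Matrix.of fun p q =>
    (if p.1.1 = 0 ∧ q.1.1 = 0 then A k
     else if 1 ≤ p.1.1 ∧ 1 ≤ q.1.1 ∧ p.1.1 + q.1.1 ≤ k then -(A (k - p.1.1 - q.1.1))
     else 0) p.2 q.2

/-- `L₀¹` (trailing coefficient of `D₁(λ,P)`). -/
def D1L0 (k : ℕ) (A : ℕ → Mat n) : Matrix (Fin k × Fin n) (Fin k × Fin n) ℂ :=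
  Matrix.of fun p q =>
    (if p.1.1 + q.1.1 + 1 ≤ k then -(A (k - 1 - p.1.1 - q.1.1)) else 0) p.2 q.2

/-- `L₁ᵏ` (leading coefficient of `D_k(λ,P)`). -/
def DkL1 (k : ℕ) (A : ℕ → Mat n) : Matrix (Fin k × Fin n) (Fin k × Fin n) ℂ :=
  Matrix.of fun p q =>
    (if k - 1 ≤ p.1.1 + q.1.1 then A (2 * k - 1 - p.1.1 - q.1.1) else 0) p.2 q.2

/-- `L₀ᵏ` (trailing coefficient of `D_k(λ,P)`). -/
def DkL0 (k : ℕ) (A : ℕ → Mat n) : Matrix (Fin k × Fin n) (Fin k × Fin n) ℂ :=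
  Matrix.of fun p q =>
    (if p.1.1 = k - 1 ∧ q.1.1 = k - 1 then -(A 0)
     else if p.1.1 ≤ k - 2 ∧ q.1.1 ≤ k - 2 ∧ k - 2 ≤ p.1.1 + q.1.1
       then A (2 * k - 2 - p.1.1 - q.1.1)
     else 0) p.2 q.2

/-- `X₁` (leading coefficient of the first companion form `C₁(λ)`). -/
def C1X (k : ℕ) (A : ℕ → Mat n) : Matrix (Fin k × Fin n) (Fin k × Fin n) ℂ :=
  Matrix.of fun p q =>
    (if p.1 = q.1 then (if p.1.1 = 0 then A k else (1 : Mat n)) else 0) p.2 q.2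

/-- `Y₁` (trailing coefficient of the first companion form `C₁(λ)`). -/
def C1Y (k : ℕ) (A : ℕ → Mat n) : Matrix (Fin k × Fin n) (Fin k × Fin n) ℂ :=
  Matrix.of fun p q =>
    (if p.1.1 = 0 then -(A (k - 1 - q.1.1))
     else if p.1.1 = q.1.1 + 1 then (1 : Mat n) else 0) p.2 q.2


private lemma dot_sum_smul {n : ℕ} (s : Finset ℕ) (c : ℕ → ℂ) (A : ℕ → Mat n)
    (x y : Fin n → ℂ) :
    star y ⬝ᵥ ((∑ i ∈ s, c i • A i) *ᵥ x) = ∑ i ∈ s, c i * (star y ⬝ᵥ (A i *ᵥ x)) := by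
  classical
  induction s using Finset.induction with
  | empty => simp
  | insert a s h ih =>
      simp [Finset.sum_insert h, Matrix.add_mulVec, Matrix.smul_mulVec,
        dotProduct_add, dotProduct_smul, smul_eq_mul, ih]

private lemma dot_pderiv {n : ℕ} (k : ℕ) (A : ℕ → Mat n) (lam : ℂ) (x y : Fin n → ℂ) :
    star y ⬝ᵥ (Pderiv k A lam *ᵥ x)
      = ∑ i ∈ Finset.range k, (((i : ℂ) + 1) * lam ^ i) * (star y ⬝ᵥ (A (i + 1) *ᵥ x)) :=
  dot_sum_smul (Finset.range k) (fun i => ((i : ℂ) + 1) * lam ^ i) (fun i => A (i + 1)) x y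

private lemma dot_peval {n : ℕ} (k : ℕ) (A : ℕ → Mat n) (lam : ℂ) (x y : Fin n → ℂ) :
    star y ⬝ᵥ (Peval k A lam *ᵥ x)
      = ∑ i ∈ Finset.range (k + 1), lam ^ i * (star y ⬝ᵥ (A i *ᵥ x)) :=
  dot_sum_smul (Finset.range (k + 1)) (fun i => lam ^ i) A x y

private lemma sum_rev (k : ℕ) (F : ℕ → ℝ) (a : ℝ) (ha : a ≠ 0) :
    a ^ k * ∑ i ∈ Finset.range (k + 1), a⁻¹ ^ i * F (k - i)
      = ∑ i ∈ Finset.range (k + 1), a ^ i * F i := by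
  rw [Finset.mul_sum, ← Finset.sum_range_reflect (fun j => a ^ j * F j) (k + 1)]
  refine Finset.sum_congr rfl fun i hi => ?_
  have h : i ≤ k := by simp at hi; omega
  simp only [Nat.add_sub_cancel]
  rw [inv_pow, ← mul_assoc, ← pow_sub₀ a ha h]

private lemma key {n k : ℕ} (A : ℕ → Mat n) (δ : ℂ) (hδ : δ ≠ 0) (hk : 1 ≤ k)
    (x y : Fin n → ℂ) :
    δ ^ (k - 1) * (star y ⬝ᵥ (Pderiv k (fun i => A (k - i)) δ⁻¹ *ᵥ x))
      = (k : ℂ) * (star y ⬝ᵥ (Peval k A δ *ᵥ x))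
        - δ * (star y ⬝ᵥ (Pderiv k A δ *ᵥ x)) := by
  set g : ℕ → ℂ := fun i => star y ⬝ᵥ (A i *ᵥ x) with hg
  have hD : star y ⬝ᵥ (Pderiv k (fun i => A (k - i)) δ⁻¹ *ᵥ x)
      = ∑ i ∈ Finset.range k, (((i : ℂ) + 1) * δ⁻¹ ^ i) * g (k - (i + 1)) :=
    dot_pderiv k (fun i => A (k - i)) δ⁻¹ x y
  rw [hD, dot_pderiv k A δ x y, dot_peval, Finset.mul_sum, Finset.mul_sum, Finset.mul_sum]
  have h2 : ∑ i ∈ Finset.range k, δ * ((((i : ℂ) + 1) * δ ^ i) * g (i + 1))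
      = ∑ i ∈ Finset.range (k + 1), (i : ℂ) * δ ^ i * g i := by
    rw [Finset.sum_range_succ' (fun i => (i : ℂ) * δ ^ i * g i) k]
    simp only [Nat.cast_zero, zero_mul, pow_zero, add_zero]
    refine Finset.sum_congr rfl fun i _ => ?_
    push_cast
    ring
  rw [h2, ← Finset.sum_sub_distrib]
  have h3 : ∑ i ∈ Finset.range (k + 1), ((k : ℂ) * (δ ^ i * g i) - (i : ℂ) * δ ^ i * g i)
      = ∑ i ∈ Finset.range k, ((k : ℂ) - (i : ℂ)) * δ ^ i * g i := by
    rw [Finset.sum_range_succ,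
      show ((k : ℂ) * (δ ^ k * g k) - (k : ℂ) * δ ^ k * g k) = 0 by ring, add_zero]
    exact Finset.sum_congr rfl fun i _ => by ring
  rw [h3, ← Finset.sum_range_reflect (fun j => ((k : ℂ) - (j : ℂ)) * δ ^ j * g j) k]
  refine Finset.sum_congr rfl fun i hi => ?_
  have hik : i < k := Finset.mem_range.mp hi
  have e1 : k - (i + 1) = k - 1 - i := by omega
  have e2 : ((k - 1 - i : ℕ) : ℂ) = (k : ℂ) - 1 - (i : ℂ) := by
    rw [Nat.cast_sub (by omega : i ≤ k - 1), Nat.cast_sub hk]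
    norm_num
  have e3 : δ ^ (k - 1) * (δ ^ i)⁻¹ = δ ^ (k - 1 - i) := (pow_sub₀ δ hδ (by omega)).symm
  simp only [e1, e2]
  rw [show (k : ℂ) - ((k : ℂ) - 1 - (i : ℂ)) = (i : ℂ) + 1 by ring]
  rw [inv_pow, ← e3]
  ring

theorem stmt_12 {n k : ℕ} (A : ℕ → Mat n) (hAk : A k ≠ 0) (hA0 : A 0 ≠ 0)
    (δ : ℂ) (hδ : δ ≠ 0) (x y : Fin n → ℂ) (hx0 : x ≠ 0) (hy0 : y ≠ 0)
    (hx : Peval k A δ *ᵥ x = 0) (hy : Matrix.vecMul (star y) (Peval k A δ) = 0)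
    (hd : star y ⬝ᵥ (Pderiv k A δ *ᵥ x) ≠ 0) :
    (∑ i ∈ Finset.range (k + 1), ‖δ‖ ^ i * specNorm (A i)) * vecNorm y * vecNorm x
        / (‖δ‖ * ‖star y ⬝ᵥ (Pderiv k A δ *ᵥ x)‖)
      = (∑ i ∈ Finset.range (k + 1), ‖δ⁻¹‖ ^ i * specNorm (A (k - i)))
            * vecNorm y * vecNorm x
          / (‖δ⁻¹‖
              * ‖star y ⬝ᵥ (Pderiv k (fun i => A (k - i)) δ⁻¹ *ᵥ x)‖) := by
  rcases Nat.eq_zero_or_pos k with hk0 | hk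
  · exfalso; apply hd; subst hk0; simp [Pderiv]
  set a := ‖δ‖ with ha
  set d := star y ⬝ᵥ (Pderiv k A δ *ᵥ x) with hdd
  set D := star y ⬝ᵥ (Pderiv k (fun i => A (k - i)) δ⁻¹ *ᵥ x) with hDD
  have ha0 : a ≠ 0 := by simpa [ha] using hδ
  have he : star y ⬝ᵥ (Peval k A δ *ᵥ x) = 0 := by rw [hx]; simp
  have hkey : δ ^ (k - 1) * D = -(δ * d) := by
    rw [hDD, hdd, key A δ hδ hk x y, he]; ring
  have habs : a ^ (k - 1) * ‖D‖ = a * ‖d‖ := by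
    have h := congrArg (‖·‖) hkey
    simpa [norm_mul, norm_pow, norm_neg, ha] using h
  have hdne : ‖d‖ ≠ 0 := by simpa using hd
  have hDne : ‖D‖ ≠ 0 := by
    intro h0
    have h1 : a * ‖d‖ = 0 := by rw [← habs, h0, mul_zero]
    rcases mul_eq_zero.mp h1 with h | h
    · exact ha0 h
    · exact hdne h
  have hS : a ^ k * (∑ i ∈ Finset.range (k + 1), a⁻¹ ^ i * specNorm (A (k - i)))
      = ∑ i ∈ Finset.range (k + 1), a ^ i * specNorm (A i) :=
    sum_rev k (fun i => specNorm (A i)) a ha0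
  simp only [norm_inv, ← ha]
  rw [← hS, ← habs]
  have hpk : a ^ k = a ^ (k - 1) * a := by
    rw [← pow_succ]; congr 1; omega
  rw [hpk]
  field_simp

end MPoly
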